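/- Fix an integer g ≥ 1 and let I_i, V_i be positive real numbers for i ∈ {1,…,g+1} (indices cyclic modulo g+1) with Π_{k=1}^{g+1} V_k < Π_{k=1}^{g+1} I_k. Define I'_i = V_i + I_i·(1 − Π_{k=1}^{g+1} (V_k/I_k)) / (1 + Σ_{j=1}^{g} Π_{k=1}^{j} (V_{i−k}/I_{i−k})) and V'_i = I_{i+1}·V_i / I'_i. Then I'_i > 0 and V'_i > 0 for all i, and the discrete periodic Toda relations hold: I'_i = I_i + V_i − V'_{i−1} for all i. -/

import Mathlib

open Finset
open Fin.NatCast

lemma aux_prod (g : ℕ) (r : Fin (g + 1) → ℝ) (i : Fin (g + 1)) :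
    (∏ k ∈ Finset.Icc 1 (g + 1), r (i - (k : Fin (g + 1)))) = ∏ k : Fin (g + 1), r k := by
  rw [← Finset.Ico_add_one_right_eq_Icc, Finset.prod_Ico_eq_prod_range,
    show g + 1 + 1 - 1 = g + 1 from rfl,
    ← Fin.prod_univ_eq_prod_range (fun k => r (i - ((1 + k : ℕ) : Fin (g + 1))))]
  have h3 : ∀ k : Fin (g + 1), ((1 + (k : ℕ) : ℕ) : Fin (g + 1)) = 1 + k := by
    intro k
    push_cast [Fin.cast_val_eq_self]
    rfl
  simp_rw [h3]
  exact Fintype.prod_equiv ((Equiv.addLeft (1 : Fin (g + 1))).trans (Equiv.subLeft i))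
    _ _ (fun x => rfl)

lemma aux_key (g : ℕ) (r : Fin (g + 1) → ℝ) (i : Fin (g + 1)) :
    r (i - 1) * (1 + ∑ j ∈ Icc 1 g, ∏ k ∈ Icc 1 j, r (i - 1 - (k : Fin (g + 1)))) =
    (1 + ∑ j ∈ Icc 1 g, ∏ k ∈ Icc 1 j, r (i - (k : Fin (g + 1)))) - 1
      + ∏ k : Fin (g + 1), r k := by
  have hterm : ∀ j : ℕ, r (i - 1) * (∏ k ∈ Icc 1 j, r (i - 1 - (k : Fin (g + 1))))
      = ∏ k ∈ Icc 1 (j + 1), r (i - (k : Fin (g + 1))) := by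
    intro j
    have h1 : ∀ k : ℕ, (i - 1 - (k : Fin (g + 1))) = i - (((k + 1 : ℕ) : Fin (g + 1))) := by
      intro k; push_cast; abel
    simp_rw [h1]
    have h2 : Finset.Icc 1 (j + 1) = insert 1 (Finset.Icc 2 (j + 1)) := by
      ext x; simp [Finset.mem_Icc]; omega
    rw [h2, Finset.prod_insert (by simp), show ((1:ℕ) : Fin (g+1)) = 1 by simp,
      show Finset.Icc 2 (j+1) = Finset.map (addRightEmbedding 1) (Finset.Icc 1 j) by
        rw [Finset.map_add_right_Icc],
      Finset.prod_map]
    rfl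
  rw [mul_add, mul_one, Finset.mul_sum, add_sub_cancel_left]
  simp_rw [hterm]
  rw [show (∑ j ∈ Icc 1 g, ∏ k ∈ Icc 1 (j+1), r (i - (k : Fin (g + 1))))
      = ∑ j ∈ Icc 2 (g+1), ∏ k ∈ Icc 1 j, r (i - (k : Fin (g + 1))) by
    rw [show Finset.Icc 2 (g+1) = Finset.map (addRightEmbedding 1) (Finset.Icc 1 g) by
        rw [Finset.map_add_right_Icc], Finset.sum_map]; rfl]
  have e1 : r (i - 1) + ∑ j ∈ Icc 2 (g+1), ∏ k ∈ Icc 1 j, r (i - (k : Fin (g + 1)))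
      = ∑ j ∈ Icc 1 (g+1), ∏ k ∈ Icc 1 j, r (i - (k : Fin (g + 1))) := by
    rw [show Finset.Icc 1 (g + 1) = insert 1 (Finset.Icc 2 (g + 1)) from by
      ext x; simp [Finset.mem_Icc]; omega, Finset.sum_insert (by simp)]
    simp
  rw [e1, Finset.sum_Icc_succ_top (by omega : 1 ≤ g + 1), aux_prod]


/-- The explicit formulas
`I'_i = V_i + I_i·(1 − Π_k V_k/I_k)/(1 + Σ_{j=1}^{g} Π_{k=1}^{j} V_{i−k}/I_{i−k})`
and `V'_i = I_{i+1}·V_i / I'_i` (indices cyclic mod `g+1`) produce positive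
quantities satisfying the discrete periodic Toda relations
`I'_i = I_i + V_i − V'_{i−1}`, provided all `I_i, V_i` are positive and
`Π V_k < Π I_k`. -/
theorem dToda_explicit_solution (g : ℕ) (hg : 1 ≤ g) (I V I' V' : Fin (g + 1) → ℝ)
    (hI : ∀ i, 0 < I i) (hV : ∀ i, 0 < V i)
    (hprod : (∏ k : Fin (g + 1), V k) < ∏ k : Fin (g + 1), I k)
    (hI' : ∀ i : Fin (g + 1), I' i =
      V i + I i * ((1 - ∏ k : Fin (g + 1), V k / I k) /
        (1 + ∑ j ∈ Finset.Icc 1 g, ∏ k ∈ Finset.Icc 1 j,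
          V (i - Fin.ofNat (g + 1) k) / I (i - Fin.ofNat (g + 1) k))))
    (hV' : ∀ i : Fin (g + 1), V' i = I (i + 1) * V i / I' i) :
    (∀ i, 0 < I' i) ∧ (∀ i, 0 < V' i) ∧
    ∀ i : Fin (g + 1), I' i = I i + V i - V' (i - 1) := by
  simp only [Fin.ofNat_eq_cast] at hI'
  obtain ⟨P, hP⟩ : ∃ P : ℝ, P = ∏ k : Fin (g + 1), V k / I k := ⟨_, rfl⟩
  obtain ⟨D, hD⟩ : ∃ D : Fin (g + 1) → ℝ, ∀ i, D i =
      1 + ∑ j ∈ Finset.Icc 1 g, ∏ k ∈ Finset.Icc 1 j,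
        V (i - (k : Fin (g + 1))) / I (i - (k : Fin (g + 1))) := ⟨_, fun _ => rfl⟩
  have hI'D : ∀ i, I' i = V i + I i * ((1 - P) / D i) := by
    intro i; rw [hI' i, hP, hD i]
  have hPpos : 0 < P := by
    rw [hP]; exact Finset.prod_pos fun m _ => div_pos (hV m) (hI m)
  have hP1 : P < 1 := by
    rw [hP, Finset.prod_div_distrib, div_lt_one (Finset.prod_pos fun m _ => hI m)]
    exact hprod
  have hDpos : ∀ i, 0 < D i := by
    intro i; rw [hD i]
    have : (0:ℝ) ≤ ∑ j ∈ Finset.Icc 1 g, ∏ k ∈ Finset.Icc 1 j,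
        V (i - (k : Fin (g + 1))) / I (i - (k : Fin (g + 1))) :=
      Finset.sum_nonneg fun j _ => Finset.prod_nonneg fun k _ =>
        (div_pos (hV _) (hI _)).le
    linarith
  have hI'pos : ∀ i, 0 < I' i := fun i => by
    rw [hI'D i]
    exact add_pos (hV i) (mul_pos (hI i) (div_pos (by linarith) (hDpos i)))
  have hV'pos : ∀ i, 0 < V' i := fun i => by
    rw [hV' i]; exact div_pos (mul_pos (hI _) (hV i)) (hI'pos i)
  refine ⟨hI'pos, hV'pos, fun i => ?_⟩
  -- key identity, in V/I form
  have keyV : V (i - 1) * D (i - 1) = I (i - 1) * (D i - 1 + P) := by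
    have h := aux_key g (fun m => V m / I m) i
    rw [← hD (i - 1), ← hD i, ← hP] at h
    have hne : I (i - 1) ≠ 0 := (hI _).ne'
    field_simp at h
    linarith [h]
  obtain ⟨i₀, hi₀⟩ : ∃ j : Fin (g + 1), j = i - 1 := ⟨_, rfl⟩
  rw [← hi₀] at keyV ⊢
  have h0 : i₀ + 1 = i := by rw [hi₀, sub_add_cancel]
  have hDne := (hDpos i).ne'
  have hD0ne := (hDpos i₀).ne'
  have hI'ne := (hI'pos i₀).ne'
  have e3 : I' i₀ * D i₀ = I i₀ * D i := by
    rw [hI'D i₀]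
    field_simp
    linear_combination keyV
  rw [hV' i₀, h0, hI'D i]
  field_simp
  apply mul_right_cancel₀ hD0ne
  linear_combination (I i * D i) * keyV + (I i * (1 - P) - I i * D i) * e3
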